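/- Suppose α, β, γ, δ ∈ (0, π) satisfy the elliptic condition: α ± β ± γ ± δ is not a multiple of 2π for all eight choices of signs. Then with σ = (α+β+γ+δ)/2, the numbers ᾱ = σ−α, β̄ = σ−β, γ̄ = σ−γ, δ̄ = σ−δ all have nonzero sine, and each of the six products (sin α sin β)/(sin ᾱ sin β̄), (sin α sin γ)/(sin ᾱ sin γ̄), (sin α sin δ)/(sin ᾱ sin δ̄), (sin β sin γ)/(sin β̄ sin γ̄), (sin β sin δ)/(sin β̄ sin δ̄), (sin γ sin δ)/(sin γ̄ sin δ̄), as well as M = (sin α sin β sin γ sin δ)/(sin ᾱ sin β̄ sin γ̄ sin δ̄), is neither 0 nor 1. -/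
import Mathlib


open Real

/-- The elliptic condition: `α ± β ± γ ± δ` is not a multiple of `2π`
for all eight choices of signs. -/
def Elliptic (α β γ δ : ℝ) : Prop :=
  ∀ e₁ e₂ e₃ : ℝ, (e₁ = 1 ∨ e₁ = -1) → (e₂ = 1 ∨ e₂ = -1) → (e₃ = 1 ∨ e₃ = -1) →
    ∀ n : ℤ, α + e₁ * β + e₂ * γ + e₃ * δ ≠ 2 * Real.pi * n

lemma cos_ne_aux (x y : ℝ) (h1 : ∀ n : ℤ, x + y ≠ 2 * Real.pi * n)
    (h2 : ∀ n : ℤ, x - y ≠ 2 * Real.pi * n) : Real.cos x ≠ Real.cos y := by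
  intro h
  rcases Real.cos_eq_cos_iff.mp h with ⟨k, hk | hk⟩
  · exact h2 (-k) (by push_cast; linarith)
  · exact h1 k (by push_cast; linarith)

lemma two_sin_mul_sin (a b : ℝ) :
    2 * (Real.sin a * Real.sin b) = Real.cos (a - b) - Real.cos (a + b) := by
  rw [Real.cos_sub, Real.cos_add]; ring

theorem elliptic_products_ne_zero_one (α β γ δ : ℝ)
    (hα : α ∈ Set.Ioo 0 Real.pi) (hβ : β ∈ Set.Ioo 0 Real.pi)
    (hγ : γ ∈ Set.Ioo 0 Real.pi) (hδ : δ ∈ Set.Ioo 0 Real.pi)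
    (hell : Elliptic α β γ δ)
    (σ : ℝ) (hσ : σ = (α + β + γ + δ) / 2) :
    (Real.sin (σ - α) ≠ 0 ∧ Real.sin (σ - β) ≠ 0 ∧
     Real.sin (σ - γ) ≠ 0 ∧ Real.sin (σ - δ) ≠ 0) ∧
    (∀ p ∈ ({(Real.sin α * Real.sin β) / (Real.sin (σ - α) * Real.sin (σ - β)),
              (Real.sin α * Real.sin γ) / (Real.sin (σ - α) * Real.sin (σ - γ)),
              (Real.sin α * Real.sin δ) / (Real.sin (σ - α) * Real.sin (σ - δ)),
              (Real.sin β * Real.sin γ) / (Real.sin (σ - β) * Real.sin (σ - γ)),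
              (Real.sin β * Real.sin δ) / (Real.sin (σ - β) * Real.sin (σ - δ)),
              (Real.sin γ * Real.sin δ) / (Real.sin (σ - γ) * Real.sin (σ - δ)),
              (Real.sin α * Real.sin β * Real.sin γ * Real.sin δ) /
                (Real.sin (σ - α) * Real.sin (σ - β) * Real.sin (σ - γ) *
                  Real.sin (σ - δ))} : Set ℝ), p ≠ 0 ∧ p ≠ 1) := by
  obtain ⟨hα1, hα2⟩ := hα
  obtain ⟨hβ1, hβ2⟩ := hβ
  obtain ⟨hγ1, hγ2⟩ := hγ
  obtain ⟨hδ1, hδ2⟩ := hδ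
  have hsa : Real.sin α ≠ 0 := ne_of_gt (Real.sin_pos_of_pos_of_lt_pi hα1 hα2)
  have hsb : Real.sin β ≠ 0 := ne_of_gt (Real.sin_pos_of_pos_of_lt_pi hβ1 hβ2)
  have hsc : Real.sin γ ≠ 0 := ne_of_gt (Real.sin_pos_of_pos_of_lt_pi hγ1 hγ2)
  have hsd : Real.sin δ ≠ 0 := ne_of_gt (Real.sin_pos_of_pos_of_lt_pi hδ1 hδ2)
  have h1 : Real.sin (σ - α) ≠ 0 := by
    intro h
    rcases Real.sin_eq_zero_iff.mp h with ⟨n, hn⟩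
    rw [hσ] at hn
    exact hell (-1) (-1) (-1) (Or.inr rfl) (Or.inr rfl) (Or.inr rfl) (-n)
      (by push_cast; linarith)
  have h2 : Real.sin (σ - β) ≠ 0 := by
    intro h
    rcases Real.sin_eq_zero_iff.mp h with ⟨n, hn⟩
    rw [hσ] at hn
    exact hell (-1) 1 1 (Or.inr rfl) (Or.inl rfl) (Or.inl rfl) n
      (by push_cast; linarith)
  have h3 : Real.sin (σ - γ) ≠ 0 := by
    intro h
    rcases Real.sin_eq_zero_iff.mp h with ⟨n, hn⟩
    rw [hσ] at hn
    exact hell 1 (-1) 1 (Or.inl rfl) (Or.inr rfl) (Or.inl rfl) n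
      (by push_cast; linarith)
  have h4 : Real.sin (σ - δ) ≠ 0 := by
    intro h
    rcases Real.sin_eq_zero_iff.mp h with ⟨n, hn⟩
    rw [hσ] at hn
    exact hell 1 1 (-1) (Or.inl rfl) (Or.inl rfl) (Or.inr rfl) n
      (by push_cast; linarith)
  -- cosine inequalities
  have c1 : Real.cos (α + β) ≠ Real.cos (γ + δ) :=
    cos_ne_aux _ _
      (fun n h => hell 1 1 1 (Or.inl rfl) (Or.inl rfl) (Or.inl rfl) n (by linarith))
      (fun n h => hell 1 (-1) (-1) (Or.inl rfl) (Or.inr rfl) (Or.inr rfl) n (by linarith))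
  have c2 : Real.cos (α + γ) ≠ Real.cos (β + δ) :=
    cos_ne_aux _ _
      (fun n h => hell 1 1 1 (Or.inl rfl) (Or.inl rfl) (Or.inl rfl) n (by linarith))
      (fun n h => hell (-1) 1 (-1) (Or.inr rfl) (Or.inl rfl) (Or.inr rfl) n (by linarith))
  have c3 : Real.cos (α + δ) ≠ Real.cos (β + γ) :=
    cos_ne_aux _ _
      (fun n h => hell 1 1 1 (Or.inl rfl) (Or.inl rfl) (Or.inl rfl) n (by linarith))
      (fun n h => hell (-1) (-1) 1 (Or.inr rfl) (Or.inr rfl) (Or.inl rfl) n (by linarith))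
  have c4 : Real.cos (α - β) ≠ Real.cos (γ - δ) :=
    cos_ne_aux _ _
      (fun n h => hell (-1) 1 (-1) (Or.inr rfl) (Or.inl rfl) (Or.inr rfl) n (by linarith))
      (fun n h => hell (-1) (-1) 1 (Or.inr rfl) (Or.inr rfl) (Or.inl rfl) n (by linarith))
  -- key inequalities between sine products
  have key_ab : Real.sin α * Real.sin β ≠ Real.sin (σ - α) * Real.sin (σ - β) := by
    intro h
    apply c1
    have e1 := two_sin_mul_sin α β
    have e2 := two_sin_mul_sin (σ - α) (σ - β)
    rw [show (σ - α) - (σ - β) = -(α - β) by ring, Real.cos_neg,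
      show (σ - α) + (σ - β) = γ + δ by rw [hσ]; ring] at e2
    linarith
  have key_ac : Real.sin α * Real.sin γ ≠ Real.sin (σ - α) * Real.sin (σ - γ) := by
    intro h
    apply c2
    have e1 := two_sin_mul_sin α γ
    have e2 := two_sin_mul_sin (σ - α) (σ - γ)
    rw [show (σ - α) - (σ - γ) = -(α - γ) by ring, Real.cos_neg,
      show (σ - α) + (σ - γ) = β + δ by rw [hσ]; ring] at e2
    linarith
  have key_ad : Real.sin α * Real.sin δ ≠ Real.sin (σ - α) * Real.sin (σ - δ) := by
    intro h
    apply c3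
    have e1 := two_sin_mul_sin α δ
    have e2 := two_sin_mul_sin (σ - α) (σ - δ)
    rw [show (σ - α) - (σ - δ) = -(α - δ) by ring, Real.cos_neg,
      show (σ - α) + (σ - δ) = β + γ by rw [hσ]; ring] at e2
    linarith
  have key_bc : Real.sin β * Real.sin γ ≠ Real.sin (σ - β) * Real.sin (σ - γ) := by
    intro h
    apply c3
    have e1 := two_sin_mul_sin β γ
    have e2 := two_sin_mul_sin (σ - β) (σ - γ)
    rw [show (σ - β) - (σ - γ) = -(β - γ) by ring, Real.cos_neg,
      show (σ - β) + (σ - γ) = α + δ by rw [hσ]; ring] at e2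
    linarith
  have key_bd : Real.sin β * Real.sin δ ≠ Real.sin (σ - β) * Real.sin (σ - δ) := by
    intro h
    apply c2
    have e1 := two_sin_mul_sin β δ
    have e2 := two_sin_mul_sin (σ - β) (σ - δ)
    rw [show (σ - β) - (σ - δ) = -(β - δ) by ring, Real.cos_neg,
      show (σ - β) + (σ - δ) = α + γ by rw [hσ]; ring] at e2
    linarith
  have key_cd : Real.sin γ * Real.sin δ ≠ Real.sin (σ - γ) * Real.sin (σ - δ) := by
    intro h
    apply c1
    have e1 := two_sin_mul_sin γ δ
    have e2 := two_sin_mul_sin (σ - γ) (σ - δ)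
    rw [show (σ - γ) - (σ - δ) = -(γ - δ) by ring, Real.cos_neg,
      show (σ - γ) + (σ - δ) = α + β by rw [hσ]; ring] at e2
    linarith
  have key_M : Real.sin α * Real.sin β * Real.sin γ * Real.sin δ ≠
      Real.sin (σ - α) * Real.sin (σ - β) * Real.sin (σ - γ) * Real.sin (σ - δ) := by
    intro h
    have eA := two_sin_mul_sin α β
    have eB := two_sin_mul_sin γ δ
    have eA' := two_sin_mul_sin (σ - α) (σ - β)
    have eB' := two_sin_mul_sin (σ - γ) (σ - δ)
    rw [show (σ - α) - (σ - β) = -(α - β) by ring, Real.cos_neg,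
      show (σ - α) + (σ - β) = γ + δ by rw [hσ]; ring] at eA'
    rw [show (σ - γ) - (σ - δ) = -(γ - δ) by ring, Real.cos_neg,
      show (σ - γ) + (σ - δ) = α + β by rw [hσ]; ring] at eB'
    have hz : (Real.cos (α - β) - Real.cos (γ - δ)) *
        (Real.cos (α + β) - Real.cos (γ + δ)) = 0 := by
      linear_combination -(Real.cos (γ - δ) - Real.cos (γ + δ)) * eA -
        2 * (Real.sin α * Real.sin β) * eB +
        (Real.cos (γ - δ) - Real.cos (α + β)) * eA' +
        2 * (Real.sin (σ - α) * Real.sin (σ - β)) * eB' + 4 * h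
    rcases mul_eq_zero.mp hz with hz | hz
    · exact c4 (by linarith)
    · exact c1 (by linarith)
  refine ⟨⟨h1, h2, h3, h4⟩, ?_⟩
  intro p hp
  simp only [Set.mem_insert_iff, Set.mem_singleton_iff] at hp
  rcases hp with rfl | rfl | rfl | rfl | rfl | rfl | rfl
  · exact ⟨div_ne_zero (mul_ne_zero hsa hsb) (mul_ne_zero h1 h2),
      fun h => key_ab ((div_eq_one_iff_eq (mul_ne_zero h1 h2)).mp h)⟩
  · exact ⟨div_ne_zero (mul_ne_zero hsa hsc) (mul_ne_zero h1 h3),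
      fun h => key_ac ((div_eq_one_iff_eq (mul_ne_zero h1 h3)).mp h)⟩
  · exact ⟨div_ne_zero (mul_ne_zero hsa hsd) (mul_ne_zero h1 h4),
      fun h => key_ad ((div_eq_one_iff_eq (mul_ne_zero h1 h4)).mp h)⟩
  · exact ⟨div_ne_zero (mul_ne_zero hsb hsc) (mul_ne_zero h2 h3),
      fun h => key_bc ((div_eq_one_iff_eq (mul_ne_zero h2 h3)).mp h)⟩
  · exact ⟨div_ne_zero (mul_ne_zero hsb hsd) (mul_ne_zero h2 h4),
      fun h => key_bd ((div_eq_one_iff_eq (mul_ne_zero h2 h4)).mp h)⟩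
  · exact ⟨div_ne_zero (mul_ne_zero hsc hsd) (mul_ne_zero h3 h4),
      fun h => key_cd ((div_eq_one_iff_eq (mul_ne_zero h3 h4)).mp h)⟩
  · exact ⟨div_ne_zero (mul_ne_zero (mul_ne_zero (mul_ne_zero hsa hsb) hsc) hsd)
        (mul_ne_zero (mul_ne_zero (mul_ne_zero h1 h2) h3) h4),
      fun h => key_M ((div_eq_one_iff_eq
        (mul_ne_zero (mul_ne_zero (mul_ne_zero h1 h2) h3) h4)).mp h)⟩
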